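/- arXiv:1312.1872 — 2 statements merged into one kernel-verified Lean document; each statement's English description precedes it below -/
import Mathlib

section
/- Let q be a finite-dimensional Lie algebra over an algebraically closed field 𝕜 of characteristic zero and let h₁,…,h_m be homogeneous elements of the Poisson centre Z(q) = S(q)^q of S(q). For any ξ ∈ q*, write h_i(μ + aξ) = Σ_{j=0}^{deg h_i} (h_i)_ξ^j(μ) a^j for a ∈ 𝕜, μ ∈ q*. Then all the polynomials (h_i)_ξ^j, for i = 1,…,m and j = 0,1,…,deg h_i − 1, pairwise commute with respect to the Lie–Poisson bracket on S(q). -/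
open scoped BigOperators
open MvPolynomial Module

noncomputable section

namespace PY

variable (𝕜 : Type*) [Field 𝕜]

section LieDefs

variable (q : Type*) [LieRing q] [LieAlgebra 𝕜 q]

/-- The coadjoint stabiliser `q_ξ = {x ∈ q | ξ⁅x,·⁆ = 0}` of `ξ ∈ q*`. -/
def coadjStab (ξ : Module.Dual 𝕜 q) : Submodule 𝕜 q where
  carrier := {x | ∀ y : q, ξ ⁅x, y⁆ = 0}
  add_mem' := by
    intro a b ha hb
    intro y; rw [add_lie, map_add, ha y, hb y, add_zero]
  zero_mem' := by intro y; rw [zero_lie, map_zero]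
  smul_mem' := by intro c x hx y; rw [smul_lie, map_smul, hx y, smul_zero]

/-- The index of a Lie algebra: the minimal dimension of a coadjoint stabiliser. -/
def lieIndex : ℕ := sInf {n | ∃ ξ : Module.Dual 𝕜 q, finrank 𝕜 (coadjStab 𝕜 q ξ) = n}

/-- `b(q) = (dim q + ind q)/2`. -/
def bFn : ℕ := (finrank 𝕜 q + lieIndex 𝕜 q) / 2

/-- The set of regular elements of `q*`: those whose coadjoint stabiliser has minimal
dimension, equivalently whose coadjoint orbit has maximal dimension. -/
def regSet : Set (Module.Dual 𝕜 q) := {ξ | finrank 𝕜 (coadjStab 𝕜 q ξ) = lieIndex 𝕜 q}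

/-- The singular (non-regular) set of `q*`. -/
def singSet : Set (Module.Dual 𝕜 q) := {ξ | finrank 𝕜 (coadjStab 𝕜 q ξ) ≠ lieIndex 𝕜 q}

variable {q}
variable {ι : Type*} [Fintype ι] [DecidableEq ι]

/-- The linear polynomial on `q*` corresponding to `y ∈ q`, w.r.t. a basis `b` of `q`;
this realises `q ⊆ S(q) = 𝕜[q*]`. -/
def linPoly (b : Basis ι 𝕜 q) (y : q) : MvPolynomial ι 𝕜 :=
  ∑ i, MvPolynomial.C (b.repr y i) * X i

/-- Evaluation of `f ∈ S(q) = 𝕜[q*]` at a point `ξ ∈ q*`. -/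
def evalAt (b : Basis ι 𝕜 q) (ξ : Module.Dual 𝕜 q) (f : MvPolynomial ι 𝕜) : 𝕜 :=
  eval (fun i => ξ (b i)) f

/-- The differential of `f ∈ S(q)` at `ξ ∈ q*`, as an element of `q`. -/
def diffAt (b : Basis ι 𝕜 q) (ξ : Module.Dual 𝕜 q) (f : MvPolynomial ι 𝕜) : q :=
  ∑ i, (evalAt 𝕜 b ξ (pderiv i f)) • b i

/-- The Hamiltonian derivation `{p, ·}` of the Lie–Poisson structure on `S(q) = 𝕜[q*]`. -/
def poissonD (b : Basis ι 𝕜 q) (p : MvPolynomial ι 𝕜) :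
    Derivation 𝕜 (MvPolynomial ι 𝕜) (MvPolynomial ι 𝕜) :=
  mkDerivation 𝕜 (fun j => ∑ i, pderiv i p * linPoly 𝕜 b ⁅b i, b j⁆)

/-- The Lie–Poisson bracket `{p, f}` on `S(q) = 𝕜[q*]`:
`{p,f}(ξ) = ⟨[(dp)_ξ, (df)_ξ], ξ⟩`, written in the coordinates given by the basis `b`. -/
def liePoisson (b : Basis ι 𝕜 q) (p f : MvPolynomial ι 𝕜) : MvPolynomial ι 𝕜 :=
  poissonD 𝕜 b p f

/-- A subset of `S(q)` is Poisson-commutative if the Lie–Poisson bracket vanishes on it. -/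
def IsPoissonComm (b : Basis ι 𝕜 q) (A : Set (MvPolynomial ι 𝕜)) : Prop :=
  ∀ f ∈ A, ∀ g ∈ A, liePoisson 𝕜 b f g = 0

/-- The subalgebra of `S(q)` of invariants of a subset `S ⊆ q`,
i.e. `{f | {y, f} = 0 ∀ y ∈ S}`. -/
def invariants (b : Basis ι 𝕜 q) (S : Set q) : Subalgebra 𝕜 (MvPolynomial ι 𝕜) where
  carrier := {f | ∀ y ∈ S, poissonD 𝕜 b (linPoly 𝕜 b y) f = 0}
  mul_mem' := by
    intro f g hf hg y hy
    rw [Derivation.leibniz, hf y hy, hg y hy, smul_zero, smul_zero, add_zero]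
  add_mem' := by intro f g hf hg y hy; rw [map_add, hf y hy, hg y hy, add_zero]
  algebraMap_mem' := by intro r y hy; exact Derivation.map_algebraMap _ r

/-- The Poisson centre `Z(q) = S(q)^q` of `S(q)`; for a connected algebraic group `Q` with
Lie algebra `q` this is the algebra of invariants `𝕜[q*]^Q`. -/
def poissonCentre (b : Basis ι 𝕜 q) : Subalgebra 𝕜 (MvPolynomial ι 𝕜) where
  carrier := {f | ∀ p : MvPolynomial ι 𝕜, poissonD 𝕜 b p f = 0}
  mul_mem' := by
    intro f g hf hg p
    rw [Derivation.leibniz, hf p, hg p, smul_zero, smul_zero, add_zero]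
  add_mem' := by intro f g hf hg p; rw [map_add, hf p, hg p, add_zero]
  algebraMap_mem' := by intro r p; exact Derivation.map_algebraMap _ r

/-- `j`-th coefficient of `a ↦ f(μ + aξ)`: the `ξ`-shift `f_ξ^j` of `f`. -/
def shiftCoeff (b : Basis ι 𝕜 q) (ξ : Module.Dual 𝕜 q) (f : MvPolynomial ι 𝕜) (j : ℕ) :
    MvPolynomial ι 𝕜 :=
  (MvPolynomial.aeval
    (fun i => (Polynomial.C (X i) + Polynomial.C (C (ξ (b i))) * Polynomial.X :
      Polynomial (MvPolynomial ι 𝕜))) f).coeff j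

/-- The set of all `ξ`-shifts of elements of `B ⊆ S(q)`. -/
def shiftsSet (b : Basis ι 𝕜 q) (ξ : Module.Dual 𝕜 q) (B : Set (MvPolynomial ι 𝕜)) :
    Set (MvPolynomial ι 𝕜) :=
  {p | ∃ f ∈ B, ∃ j : ℕ, p = shiftCoeff 𝕜 b ξ f j}

/-- The Mishchenko–Fomenko subalgebra `F_ξ(B)` generated by all `ξ`-shifts of elements of `B`. -/
def mfAlgebra (b : Basis ι 𝕜 q) (ξ : Module.Dual 𝕜 q) (B : Set (MvPolynomial ι 𝕜)) :
    Subalgebra 𝕜 (MvPolynomial ι 𝕜) :=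
  Algebra.adjoin 𝕜 (shiftsSet 𝕜 b ξ B)

/-- The ideal of polynomials vanishing on a subset `S ⊆ q*`. -/
def vanishingIdeal (b : Basis ι 𝕜 q) (S : Set (Module.Dual 𝕜 q)) : Ideal (MvPolynomial ι 𝕜) where
  carrier := {f | ∀ ξ ∈ S, evalAt 𝕜 b ξ f = 0}
  add_mem' := by
    intro f g hf hg ξ hξ
    have hf' : eval (fun i => ξ (b i)) f = 0 := hf ξ hξ
    have hg' : eval (fun i => ξ (b i)) g = 0 := hg ξ hξ
    show eval (fun i => ξ (b i)) (f + g) = 0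
    rw [map_add, hf', hg', add_zero]
  zero_mem' := by
    intro ξ hξ
    show eval (fun i => ξ (b i)) (0 : MvPolynomial ι 𝕜) = 0
    rw [map_zero]
  smul_mem' := by
    intro c f hf ξ hξ
    have hf' : eval (fun i => ξ (b i)) f = 0 := hf ξ hξ
    show eval (fun i => ξ (b i)) (c * f) = 0
    rw [map_mul, hf', mul_zero]

/-- `S ⊆ q*` has codimension at least `n`: the Krull dimension of the coordinate ring of its
Zariski closure is at most `dim q - n`. -/
def codimGE (b : Basis ι 𝕜 q) (S : Set (Module.Dual 𝕜 q)) (n : ℕ) : Prop :=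
  ringKrullDim (MvPolynomial ι 𝕜 ⧸ vanishingIdeal 𝕜 b S) + (n : WithBot ℕ∞)
    ≤ (finrank 𝕜 q : WithBot ℕ∞)

variable (q) in
/-- The *codim-n property* for a Lie algebra `q`: the non-regular points of `q*` form a subset
of codimension at least `n`. -/
def hasCodimProp (n : ℕ) : Prop :=
  ∀ b : Basis (Fin (finrank 𝕜 q)) 𝕜 q, codimGE 𝕜 b (singSet 𝕜 q) n

/-- Transcendence degree (over `𝕜`) of a subalgebra: the supremum of the cardinalities of its
finite algebraically independent families. -/
def subTrdeg {R : Type*} [CommRing R] [Algebra 𝕜 R] (A : Subalgebra 𝕜 R) : ℕ :=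
  sSup {n | ∃ f : Fin n → A, AlgebraicIndependent 𝕜 f}

end LieDefs

section Symmetric

variable {g : Type*} [LieRing g] [LieAlgebra 𝕜 g]

/-- `σ` is an involution of the Lie algebra `g`. -/
def IsInvolution (σ : g ≃ₗ⁅𝕜⁆ g) : Prop := ∀ x, σ (σ x) = x

lemma invAdd (σ : g ≃ₗ⁅𝕜⁆ g) (a b : g) : σ (a + b) = σ a + σ b :=
  map_add (σ : g ≃ₗ[𝕜] g) a b

lemma invSmul (σ : g ≃ₗ⁅𝕜⁆ g) (c : 𝕜) (x : g) : σ (c • x) = c • σ x :=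
  map_smul (σ : g ≃ₗ[𝕜] g) c x

lemma invZero (σ : g ≃ₗ⁅𝕜⁆ g) : σ (0 : g) = 0 :=
  map_zero (σ : g ≃ₗ[𝕜] g)

/-- The `(+1)`-eigenspace `g₀` of an involution `σ`, as a Lie subalgebra. -/
def fixedAlg (σ : g ≃ₗ⁅𝕜⁆ g) : LieSubalgebra 𝕜 g where
  carrier := {x | σ x = x}
  add_mem' := by intro a b ha hb; show σ (a + b) = a + b; rw [invAdd]
                 rw [Set.mem_setOf_eq] at ha hb; rw [ha, hb]
  zero_mem' := by show σ 0 = 0; rw [invZero]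
  smul_mem' := by intro c x hx; show σ (c • x) = c • x; rw [invSmul]
                  rw [Set.mem_setOf_eq] at hx; rw [hx]
  lie_mem' := by intro x y hx hy; show σ ⁅x, y⁆ = ⁅x, y⁆
                 rw [Set.mem_setOf_eq] at hx hy
                 rw [LieEquiv.map_lie, hx, hy]

/-- The `(−1)`-eigenspace `g₁` of an involution `σ`, as a submodule. -/
def oddPart (σ : g ≃ₗ⁅𝕜⁆ g) : Submodule 𝕜 g where
  carrier := {x | σ x = -x}
  add_mem' := by intro a b ha hb; show σ (a + b) = -(a + b); rw [invAdd]
                 rw [Set.mem_setOf_eq] at ha hb; rw [ha, hb, neg_add]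
  zero_mem' := by show σ 0 = -0; rw [invZero, neg_zero]
  smul_mem' := by intro c x hx; show σ (c • x) = -(c • x); rw [invSmul]
                  rw [Set.mem_setOf_eq] at hx; rw [hx, smul_neg]

/-- A Cartan subspace of `g₁`: a maximal subspace of `g₁` consisting of pairwise commuting
semisimple elements. -/
def IsCartanSubspace (σ : g ≃ₗ⁅𝕜⁆ g) (c : Submodule 𝕜 g) : Prop :=
  (c ≤ oddPart 𝕜 σ ∧ (∀ x ∈ c, ∀ y ∈ c, ⁅x, y⁆ = 0) ∧
      ∀ x ∈ c, Module.End.IsSemisimple (LieAlgebra.ad 𝕜 g x)) ∧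
  ∀ c' : Submodule 𝕜 g,
    (c' ≤ oddPart 𝕜 σ ∧ (∀ x ∈ c', ∀ y ∈ c', ⁅x, y⁆ = 0) ∧
      ∀ x ∈ c', Module.End.IsSemisimple (LieAlgebra.ad 𝕜 g x)) → c ≤ c' → c' = c

/-- The rank `rk(g,g₀)` of the symmetric pair: the dimension of a Cartan subspace of `g₁`. -/
def pairRank (σ : g ≃ₗ⁅𝕜⁆ g) : ℕ :=
  sSup {n | ∃ c : Submodule 𝕜 g, IsCartanSubspace 𝕜 σ c ∧ finrank 𝕜 c = n}

/-- The centraliser `g_z` of an element `z`, as a Lie subalgebra. -/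
def cent (z : g) : LieSubalgebra 𝕜 g where
  carrier := {x | ⁅x, z⁆ = 0}
  add_mem' := by intro a b ha hb; show ⁅a + b, z⁆ = 0
                 rw [Set.mem_setOf_eq] at ha hb; rw [add_lie, ha, hb, add_zero]
  zero_mem' := by show ⁅(0 : g), z⁆ = 0; rw [zero_lie]
  smul_mem' := by intro c x hx; show ⁅c • x, z⁆ = 0
                  rw [Set.mem_setOf_eq] at hx; rw [smul_lie, hx, smul_zero]
  lie_mem' := by intro x y hx hy; show ⁅⁅x, y⁆, z⁆ = 0
                 rw [Set.mem_setOf_eq] at hx hy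
                 rw [lie_lie, hx, hy, lie_zero, lie_zero, sub_zero]

/-- `g_{0,z} = g_z ∩ g₀`, as a Lie subalgebra. -/
def cent0 (σ : g ≃ₗ⁅𝕜⁆ g) (z : g) : LieSubalgebra 𝕜 g where
  carrier := {x | σ x = x ∧ ⁅x, z⁆ = 0}
  add_mem' := by
    intro a b ha hb
    exact ⟨by rw [invAdd, ha.1, hb.1], by rw [add_lie, ha.2, hb.2, add_zero]⟩
  zero_mem' := ⟨by rw [invZero], by rw [zero_lie]⟩
  smul_mem' := by
    intro c x hx
    exact ⟨by rw [invSmul, hx.1], by rw [smul_lie, hx.2, smul_zero]⟩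
  lie_mem' := by
    intro x y hx hy
    exact ⟨by rw [LieEquiv.map_lie, hx.1, hy.1],
      by rw [lie_lie, hx.2, hy.2, lie_zero, lie_zero, sub_zero]⟩

/-- `g_{1,z} = g_z ∩ g₁`, as a submodule. -/
def cent1 (σ : g ≃ₗ⁅𝕜⁆ g) (z : g) : Submodule 𝕜 g where
  carrier := {x | σ x = -x ∧ ⁅x, z⁆ = 0}
  add_mem' := by
    intro a b ha hb
    exact ⟨by rw [invAdd, ha.1, hb.1, neg_add], by rw [add_lie, ha.2, hb.2, add_zero]⟩
  zero_mem' := ⟨by rw [invZero, neg_zero], by rw [zero_lie]⟩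
  smul_mem' := by
    intro c x hx
    exact ⟨by rw [invSmul, hx.1, smul_neg], by rw [smul_lie, hx.2, smul_zero]⟩

/-- The centraliser `r = z(c)₀` in `g₀` of a subspace `c ⊆ g₁`, as a Lie subalgebra. -/
def centSub (σ : g ≃ₗ⁅𝕜⁆ g) (c : Submodule 𝕜 g) : LieSubalgebra 𝕜 g where
  carrier := {x | σ x = x ∧ ∀ y ∈ c, ⁅x, y⁆ = 0}
  add_mem' := by
    intro a b ha hb
    refine ⟨by rw [invAdd, ha.1, hb.1], fun y hy => ?_⟩
    rw [add_lie, ha.2 y hy, hb.2 y hy, add_zero]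
  zero_mem' := ⟨by rw [invZero], fun y _ => by rw [zero_lie]⟩
  smul_mem' := by
    intro k x hx
    exact ⟨by rw [invSmul, hx.1], fun y hy => by rw [smul_lie, hx.2 y hy, smul_zero]⟩
  lie_mem' := by
    intro x y hx hy
    refine ⟨by rw [LieEquiv.map_lie, hx.1, hy.1], fun w hw => ?_⟩
    rw [lie_lie, hx.2 w hw, hy.2 w hw, lie_zero, lie_zero, sub_zero]

/-- Projection onto the `(+1)`-eigenspace of `σ` (characteristic ≠ 2). -/
def proj0 (σ : g ≃ₗ⁅𝕜⁆ g) (v : g) : g := (2 : 𝕜)⁻¹ • (v + σ v)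

/-- Projection onto the `(−1)`-eigenspace of `σ` (characteristic ≠ 2). -/
def proj1 (σ : g ≃ₗ⁅𝕜⁆ g) (v : g) : g := (2 : 𝕜)⁻¹ • (v - σ v)

/-- `k`, via the linear isomorphism `e : k ≃ g`, is the `Z₂`-contraction `g₀ ⋉ g₁` of `g`
determined by the involution `σ`: the bracket of `k` is the bracket of `g` with the
`g₁ × g₁ → g₀` component suppressed (so `g₁` becomes an abelian ideal). -/
def IsZ2Contraction (σ : g ≃ₗ⁅𝕜⁆ g) {k : Type*} [LieRing k] [LieAlgebra 𝕜 k]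
    (e : k ≃ₗ[𝕜] g) : Prop :=
  ∀ x y : k, e ⁅x, y⁆ =
    ⁅proj0 𝕜 σ (e x), proj0 𝕜 σ (e y)⁆ + ⁅proj0 𝕜 σ (e x), proj1 𝕜 σ (e y)⁆
      + ⁅proj1 𝕜 σ (e x), proj0 𝕜 σ (e y)⁆

/-- An element nilpotent in a Lie algebra: its adjoint action is nilpotent. -/
def IsNilpotentElt (x : g) : Prop := IsNilpotent (LieAlgebra.ad 𝕜 g x)

/-- An element semisimple in a Lie algebra: its adjoint action is semisimple. -/
def IsSemisimpleElt (x : g) : Prop := Module.End.IsSemisimple (LieAlgebra.ad 𝕜 g x)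

/-- The symmetric pair `(g, g₀)` is `N`-regular: `g₁` contains a regular nilpotent
element of `g`. -/
def IsNRegularPair [Module.Finite 𝕜 g] (σ : g ≃ₗ⁅𝕜⁆ g) : Prop :=
  ∃ v ∈ oddPart 𝕜 σ, IsNilpotentElt 𝕜 v ∧ LieAlgebra.IsRegular 𝕜 v

/-- `z` is a `G₀`-regular element of `g₁`: its stabiliser `g_{0,z}` in `g₀` has minimal
dimension, equivalently its `G₀`-orbit has maximal dimension. -/
def IsIsotropyRegular (σ : g ≃ₗ⁅𝕜⁆ g) (z : g) : Prop :=
  z ∈ oddPart 𝕜 σ ∧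
    ∀ y ∈ oddPart 𝕜 σ, finrank 𝕜 (cent0 𝕜 σ z) ≤ finrank 𝕜 (cent0 𝕜 σ y)

/-- A toral Lie algebra: abelian, with all elements semisimple (the Lie algebra of a torus). -/
def IsToral (h : LieSubalgebra 𝕜 g) : Prop :=
  (∀ x ∈ h, ∀ y ∈ h, ⁅x, y⁆ = 0) ∧ ∀ x ∈ h, IsSemisimpleElt 𝕜 x

end Symmetric

end PY

open PY Module

namespace MFAux

open MvPolynomial PY

variable {𝕜 : Type*} [Field 𝕜]
variable {q : Type*} [LieRing q] [LieAlgebra 𝕜 q]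
variable {ι : Type*} [Fintype ι] [DecidableEq ι]
variable (b : Basis ι 𝕜 q)

lemma eval_linPoly (η : Module.Dual 𝕜 q) (y : q) :
    eval (fun i => η (b i)) (linPoly 𝕜 b y) = η y := by
  have hy : η y = η (∑ i, b.repr y i • b i) := by rw [b.sum_repr y]
  rw [hy, map_sum, linPoly, map_sum]
  refine Finset.sum_congr rfl fun i _ => ?_
  simp [smul_eq_mul]

/-- A sum of multiples of partial derivatives, as a derivation. -/
def sumDeriv (c : ι → MvPolynomial ι 𝕜) :
    Derivation 𝕜 (MvPolynomial ι 𝕜) (MvPolynomial ι 𝕜) where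
  toFun := fun f => ∑ j, c j * pderiv j f
  map_add' := by intro f g; simp [mul_add, Finset.sum_add_distrib]
  map_smul' := by intro a f; simp [Finset.smul_sum, mul_smul_comm]
  map_one_eq_zero' := by simp
  leibniz' := by
    intro f g
    simp only [LinearMap.coe_mk, AddHom.coe_mk, pderiv_mul, mul_add,
      Finset.sum_add_distrib, smul_eq_mul, Finset.mul_sum]
    rw [add_comm]
    congr 1 <;> (refine Finset.sum_congr rfl fun j _ => ?_; ring)

lemma poissonD_apply (p f : MvPolynomial ι 𝕜) :
    poissonD 𝕜 b p f = ∑ j, (∑ i, pderiv i p * linPoly 𝕜 b ⁅b i, b j⁆) * pderiv j f := by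
  have h : poissonD 𝕜 b p = sumDeriv (fun j => ∑ i, pderiv i p * linPoly 𝕜 b ⁅b i, b j⁆) := by
    apply derivation_ext
    intro k
    rw [poissonD, mkDerivation_X]
    refine Eq.symm ?_
    show ∑ j, (∑ i, pderiv i p * linPoly 𝕜 b ⁅b i, b j⁆) * pderiv j (X k) = _
    rw [Finset.sum_eq_single k]
    · simp
    · intro j _ hj; rw [pderiv_X_of_ne (Ne.symm hj), mul_zero]
    · intro hk; exact absurd (Finset.mem_univ k) hk
  rw [h]; rfl

lemma sum_lie' {α : Type*} (s : Finset α) (F : α → q) (y : q) :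
    ⁅(∑ a ∈ s, F a), y⁆ = ∑ a ∈ s, ⁅F a, y⁆ := by
  induction s using Finset.cons_induction with
  | empty => simp
  | cons a s ha ih => rw [Finset.sum_cons, Finset.sum_cons, add_lie, ih]

lemma lie_sum' {α : Type*} (s : Finset α) (F : α → q) (y : q) :
    ⁅y, ∑ a ∈ s, F a⁆ = ∑ a ∈ s, ⁅y, F a⁆ := by
  induction s using Finset.cons_induction with
  | empty => simp
  | cons a s ha ih => rw [Finset.sum_cons, Finset.sum_cons, lie_add, ih]

lemma evalAt_poissonD (η : Module.Dual 𝕜 q) (p f : MvPolynomial ι 𝕜) :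
    evalAt 𝕜 b η (poissonD 𝕜 b p f) = η ⁅diffAt 𝕜 b η p, diffAt 𝕜 b η f⁆ := by
  rw [poissonD_apply, diffAt, diffAt, evalAt]
  simp only [map_sum, map_mul, MFAux.sum_lie', MFAux.lie_sum', smul_lie, lie_smul, map_smul,
    smul_eq_mul, eval_linPoly, evalAt]
  refine Finset.sum_congr rfl fun j _ => ?_
  rw [Finset.sum_mul, Finset.mul_sum]
  refine Finset.sum_congr rfl fun i _ => ?_
  ring

lemma diffAt_linPoly (η : Module.Dual 𝕜 q) (c : q) : diffAt 𝕜 b η (linPoly 𝕜 b c) = c := by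
  have hp : ∀ i, pderiv i (linPoly 𝕜 b c) = C (b.repr c i) := by
    intro i
    rw [linPoly, map_sum]
    rw [Finset.sum_eq_single i]
    · rw [pderiv_C_mul, pderiv_X_self, mul_one]
    · intro k _ hk; rw [pderiv_C_mul, pderiv_X_of_ne hk, mul_zero]
    · intro hk; exact absurd (Finset.mem_univ i) hk
  have : diffAt 𝕜 b η (linPoly 𝕜 b c) = ∑ i, b.repr c i • b i := by
    rw [diffAt]
    refine Finset.sum_congr rfl fun i _ => ?_
    rw [hp i]
    simp [evalAt]
  rw [this, b.sum_repr]

lemma centre_vanish {f : MvPolynomial ι 𝕜} (hf : f ∈ poissonCentre 𝕜 b)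
    (η : Module.Dual 𝕜 q) (c : q) : η ⁅c, diffAt 𝕜 b η f⁆ = 0 := by
  have h0 : poissonD 𝕜 b (linPoly 𝕜 b c) f = 0 := hf (linPoly 𝕜 b c)
  have h1 := congrArg (evalAt 𝕜 b η) h0
  rw [evalAt_poissonD, diffAt_linPoly] at h1
  simpa [evalAt] using h1

lemma pderiv_aeval_shift (g : ι → 𝕜) (j : ι) (f : MvPolynomial ι 𝕜) :
    pderiv j (aeval (fun i => X i + C (g i)) f)
      = aeval (fun i => X i + C (g i)) (pderiv j f) := by
  induction f using MvPolynomial.induction_on with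
  | C a => simp
  | add p r hp hr => simp only [map_add, hp, hr]
  | mul_X p i hp =>
      simp only [map_mul, aeval_X, pderiv_mul, hp, map_add, pderiv_C, add_zero]
      by_cases h : i = j
      · subst h; simp
      · simp [pderiv_X_of_ne h]

lemma eval_aeval_shift (v g : ι → 𝕜) (f : MvPolynomial ι 𝕜) :
    eval v (aeval (fun i => X i + C (g i)) f) = eval (fun i => v i + g i) f := by
  induction f using MvPolynomial.induction_on with
  | C a => simp
  | add p r hp hr => simp only [map_add, hp, hr]
  | mul_X p i hp => simp only [map_mul, map_add, aeval_X, eval_X, eval_C, eval_add, hp]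

lemma diffAt_shift (ξ η : Module.Dual 𝕜 q) (t : 𝕜) (f : MvPolynomial ι 𝕜) :
    diffAt 𝕜 b η (aeval (fun i => X i + C (t * ξ (b i))) f)
      = diffAt 𝕜 b (η + t • ξ) f := by
  rw [diffAt, diffAt]
  refine Finset.sum_congr rfl fun i _ => ?_
  rw [pderiv_aeval_shift]
  congr 1
  have hfun : (fun k => η (b k) + t * ξ (b k)) = (fun k => (η + t • ξ) (b k)) := by
    funext k; simp
  rw [evalAt, evalAt, eval_aeval_shift, hfun]

lemma pointwise_zero (ξ : Module.Dual 𝕜 q) {f g : MvPolynomial ι 𝕜}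
    (hf : f ∈ poissonCentre 𝕜 b) (hg : g ∈ poissonCentre 𝕜 b)
    (η : Module.Dual 𝕜 q) {s t : 𝕜} (hst : s ≠ t) :
    evalAt 𝕜 b η (poissonD 𝕜 b (aeval (fun i => X i + C (s * ξ (b i))) f)
      (aeval (fun i => X i + C (t * ξ (b i))) g)) = 0 := by
  rw [evalAt_poissonD, diffAt_shift, diffAt_shift]
  set u := diffAt 𝕜 b (η + s • ξ) f with hu
  set w := diffAt 𝕜 b (η + t • ξ) g with hw
  have h1 : (η + s • ξ) ⁅w, u⁆ = 0 := centre_vanish b hf _ _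
  have h2 : (η + t • ξ) ⁅u, w⁆ = 0 := centre_vanish b hg _ _
  have hskew : ⁅w, u⁆ = -⁅u, w⁆ := by rw [← lie_skew]
  rw [hskew] at h1
  simp only [LinearMap.add_apply, LinearMap.smul_apply, smul_eq_mul, map_neg] at h1 h2
  have e1 : η ⁅u, w⁆ + s * ξ ⁅u, w⁆ = 0 := by linear_combination -h1
  have hA : ξ ⁅u, w⁆ = 0 := by
    have key : (s - t) * ξ ⁅u, w⁆ = 0 := by linear_combination e1 - h2
    exact (mul_eq_zero.mp key).resolve_left (sub_ne_zero.mpr hst)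
  linear_combination h2 - t * hA

/-- The generating polynomial of the shifts. -/
def phi (ξ : Module.Dual 𝕜 q) (f : MvPolynomial ι 𝕜) : Polynomial (MvPolynomial ι 𝕜) :=
  MvPolynomial.aeval
    (fun i => (Polynomial.C (X i) + Polynomial.C (C (ξ (b i))) * Polynomial.X :
      Polynomial (MvPolynomial ι 𝕜))) f

lemma shiftCoeff_eq (ξ : Module.Dual 𝕜 q) (f : MvPolynomial ι 𝕜) (j : ℕ) :
    shiftCoeff 𝕜 b ξ f j = (phi b ξ f).coeff j := rfl

lemma shift_expand (ξ : Module.Dual 𝕜 q) (t : 𝕜) (f : MvPolynomial ι 𝕜) :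
    aeval (fun i => X i + C (t * ξ (b i))) f
      = ∑ j ∈ Finset.range ((phi b ξ f).natDegree + 1), t ^ j • shiftCoeff 𝕜 b ξ f j := by
  have h1 : aeval (fun i => X i + C (t * ξ (b i))) f = Polynomial.eval (C t) (phi b ξ f) := by
    rw [phi]
    induction f using MvPolynomial.induction_on with
    | C a => simp [algebraMap_eq]
    | add p r hp hr => simp only [map_add, hp, hr, Polynomial.eval_add]
    | mul_X p i hp =>
        rw [map_mul, map_mul, aeval_X, aeval_X, Polynomial.eval_mul, hp]
        congr 1
        rw [Polynomial.eval_add, Polynomial.eval_C, Polynomial.eval_mul, Polynomial.eval_C,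
          Polynomial.eval_X, ← C_mul, mul_comm (ξ (b i)) t]
  rw [h1, Polynomial.eval_eq_sum_range]
  refine Finset.sum_congr rfl fun j _ => ?_
  rw [shiftCoeff_eq, smul_eq_C_mul, ← C_pow, mul_comm]

/-- `diffAt` as a linear map. -/
def diffAtL (η : Module.Dual 𝕜 q) : MvPolynomial ι 𝕜 →ₗ[𝕜] q where
  toFun := diffAt 𝕜 b η
  map_add' := by
    intro f g
    simp only [diffAt, evalAt, map_add, add_smul, Finset.sum_add_distrib]
  map_smul' := by
    intro a f
    simp only [diffAt, evalAt, Derivation.map_smul, RingHom.id_apply, smul_eq_C_mul,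
      pderiv_C_mul, map_mul, eval_C, Finset.smul_sum, smul_smul]

lemma diffAt_sum_smul (η : Module.Dual 𝕜 q) (N : ℕ) (a : ℕ → 𝕜) (F : ℕ → MvPolynomial ι 𝕜) :
    diffAt 𝕜 b η (∑ j ∈ Finset.range N, a j • F j)
      = ∑ j ∈ Finset.range N, a j • diffAt 𝕜 b η (F j) := by
  have : diffAt 𝕜 b η (∑ j ∈ Finset.range N, a j • F j)
      = diffAtL b η (∑ j ∈ Finset.range N, a j • F j) := rfl
  rw [this, map_sum]
  refine Finset.sum_congr rfl fun j _ => ?_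
  rw [map_smul]
  rfl

lemma coeffs_zero_of_infinite {N : ℕ} (d : ℕ → 𝕜) {S : Set 𝕜} (hS : S.Infinite)
    (hv : ∀ t ∈ S, ∑ j ∈ Finset.range N, d j * t ^ j = 0) : ∀ j < N, d j = 0 := by
  set p : Polynomial 𝕜 := ∑ j ∈ Finset.range N, Polynomial.C (d j) * Polynomial.X ^ j with hp
  have hroot : S ⊆ {x | p.IsRoot x} := by
    intro t ht
    show p.eval t = 0
    rw [hp, Polynomial.eval_finset_sum]
    simpa using hv t ht
  have hp0 : p = 0 := Polynomial.eq_zero_of_infinite_isRoot p (hS.mono hroot)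
  intro j hj
  have hc := congrArg (fun r => Polynomial.coeff r j) hp0
  rw [hp] at hc
  simp only [Polynomial.finset_sum_coeff, Polynomial.coeff_C_mul, Polynomial.coeff_X_pow,
    mul_ite, mul_one, mul_zero, Polynomial.coeff_zero, Finset.sum_ite_eq,
    Finset.mem_range] at hc
  rwa [if_pos hj] at hc

lemma liePoisson_zero_left (p : MvPolynomial ι 𝕜) : liePoisson 𝕜 b 0 p = 0 := by
  show poissonD 𝕜 b 0 p = 0
  rw [poissonD_apply]
  simp

lemma liePoisson_zero_right (p : MvPolynomial ι 𝕜) : liePoisson 𝕜 b p 0 = 0 := by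
  show poissonD 𝕜 b p 0 = 0
  exact map_zero _

end MFAux

/- In the following, for a connected algebraic group `Q` with Lie algebra `q`, the algebra of
invariants `𝕜[q*]^Q` coincides with the Poisson centre `Z(q) = S(q)^q`, which is what we use;
likewise `Q`-regularity of `ξ ∈ q*` (maximality of the dimension of the coadjoint `Q`-orbit)
coincides with minimality of the dimension of the stabiliser `q_ξ`. The symmetric algebra
`S(q) ≅ 𝕜[q*]` is modelled as `MvPolynomial ι 𝕜` via a basis `b` of `q`. -/

/-- Mishchenko–Fomenko: the `ξ`-shifts `(h_i)_ξ^j`, `j = 0, …, deg h_i − 1`, of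
homogeneous elements `h_1, …, h_m` of the Poisson centre `Z(q)` pairwise commute with respect to
the Lie–Poisson bracket. -/
theorem statement1 (𝕜 : Type*) [Field 𝕜] [IsAlgClosed 𝕜] [CharZero 𝕜]
    (q : Type*) [LieRing q] [LieAlgebra 𝕜 q] [FiniteDimensional 𝕜 q]
    {ι : Type*} [Fintype ι] [DecidableEq ι] (b : Basis ι 𝕜 q)
    (m : ℕ) (h : Fin m → MvPolynomial ι 𝕜)
    (hZ : ∀ i, h i ∈ poissonCentre 𝕜 b)
    (hhom : ∀ i, (h i).IsHomogeneous ((h i).totalDegree))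
    (ξ : Module.Dual 𝕜 q) :
    ∀ (i i' : Fin m) (j j' : ℕ), j < (h i).totalDegree → j' < (h i').totalDegree →
      liePoisson 𝕜 b (shiftCoeff 𝕜 b ξ (h i) j) (shiftCoeff 𝕜 b ξ (h i') j') = 0 := by
  classical
  intro i i' j j' _ _
  set f := h i with hf
  set g := h i' with hg
  set N := (MFAux.phi b ξ f).natDegree + 1 with hN
  set M := (MFAux.phi b ξ g).natDegree + 1 with hM
  by_cases hjN : j < N
  swap
  · have hz : shiftCoeff 𝕜 b ξ f j = 0 := by
      rw [MFAux.shiftCoeff_eq]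
      exact Polynomial.coeff_eq_zero_of_natDegree_lt (by omega)
    rw [hz]
    exact MFAux.liePoisson_zero_left b _
  by_cases hj'M : j' < M
  swap
  · have hz : shiftCoeff 𝕜 b ξ g j' = 0 := by
      rw [MFAux.shiftCoeff_eq]
      exact Polynomial.coeff_eq_zero_of_natDegree_lt (by omega)
    rw [hz]
    exact MFAux.liePoisson_zero_right b _
  -- main case: evaluate at all points and use MvPolynomial.funext
  refine MvPolynomial.funext fun x => ?_
  rw [map_zero]
  -- realise the point `x` as a linear functional on `q`
  set η : Module.Dual 𝕜 q := ∑ k, x k • b.coord k with hη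
  have hxη : (fun k => η (b k)) = x := by
    funext k
    rw [hη]
    simp only [LinearMap.coe_sum, Finset.sum_apply, LinearMap.smul_apply,
      Basis.coord_apply, Basis.repr_self, smul_eq_mul]
    rw [Finset.sum_eq_single k]
    · simp
    · intro c _ hc; simp [Finsupp.single_apply, Ne.symm hc]
    · intro hk; exact absurd (Finset.mem_univ k) hk
  have hevAt : ∀ p : MvPolynomial ι 𝕜, eval x p = evalAt 𝕜 b η p := by
    intro p; rw [evalAt, hxη]
  -- the matrix of brackets of shifts, evaluated at `η`
  set c : ℕ → ℕ → 𝕜 := fun a a' =>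
    η ⁅diffAt 𝕜 b η (shiftCoeff 𝕜 b ξ f a), diffAt 𝕜 b η (shiftCoeff 𝕜 b ξ g a')⁆ with hc
  have key : ∀ s t : 𝕜, s ≠ t →
      ∑ a ∈ Finset.range N, ∑ a' ∈ Finset.range M, s ^ a * t ^ a' * c a a' = 0 := by
    intro s t hst
    have h0 := MFAux.pointwise_zero b ξ (hZ i) (hZ i') η hst
    have hexp : evalAt 𝕜 b η (poissonD 𝕜 b (aeval (fun k => X k + C (s * ξ (b k))) f)
        (aeval (fun k => X k + C (t * ξ (b k))) g))
        = ∑ a ∈ Finset.range N, ∑ a' ∈ Finset.range M, s ^ a * t ^ a' * c a a' := by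
      rw [MFAux.evalAt_poissonD, MFAux.shift_expand, MFAux.shift_expand,
        MFAux.diffAt_sum_smul, MFAux.diffAt_sum_smul, ← hN, ← hM]
      simp only [MFAux.sum_lie', MFAux.lie_sum', smul_lie, lie_smul, map_sum, map_smul,
        smul_eq_mul, Finset.mul_sum]
      rw [Finset.sum_comm]
      refine Finset.sum_congr rfl fun a _ => Finset.sum_congr rfl fun a' _ => ?_
      simp only [hc]
      ring
    rw [← hexp]
    exact h0
  -- extraction step 1: for every `s`, the inner sums vanish
  have step1 : ∀ a' < M, ∀ s : 𝕜, ∑ a ∈ Finset.range N, (c a a' * s ^ a) = 0 := by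
    intro a' ha' s
    have h1 : ∀ t ∈ ({s}ᶜ : Set 𝕜), ∑ b' ∈ Finset.range M,
        (∑ a ∈ Finset.range N, c a b' * s ^ a) * t ^ b' = 0 := by
      intro t ht
      have hst : s ≠ t := fun hh => ht (by simp [hh])
      calc ∑ b' ∈ Finset.range M, (∑ a ∈ Finset.range N, c a b' * s ^ a) * t ^ b'
          = ∑ b' ∈ Finset.range M, ∑ a ∈ Finset.range N, s ^ a * t ^ b' * c a b' := by
            refine Finset.sum_congr rfl fun b' _ => ?_
            rw [Finset.sum_mul]
            refine Finset.sum_congr rfl fun a _ => ?_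
            ring
        _ = ∑ a ∈ Finset.range N, ∑ b' ∈ Finset.range M, s ^ a * t ^ b' * c a b' :=
            Finset.sum_comm
        _ = 0 := key s t hst
    have hSinf : ({s}ᶜ : Set 𝕜).Infinite := (Set.finite_singleton s).infinite_compl
    exact MFAux.coeffs_zero_of_infinite (fun b' => ∑ a ∈ Finset.range N, c a b' * s ^ a)
      hSinf h1 a' ha'
  -- extraction step 2: each coefficient vanishes
  have step2 : c j j' = 0 := by
    have h2 : ∀ s ∈ (Set.univ : Set 𝕜), ∑ a ∈ Finset.range N, c a j' * s ^ a = 0 :=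
      fun s _ => step1 j' hj'M s
    exact MFAux.coeffs_zero_of_infinite (fun a => c a j') Set.infinite_univ h2 j hjN
  -- conclude
  rw [hevAt]
  show evalAt 𝕜 b η (poissonD 𝕜 b (shiftCoeff 𝕜 b ξ f j) (shiftCoeff 𝕜 b ξ g j')) = 0
  rw [MFAux.evalAt_poissonD]
  exact step2
end
end

section
/- Let g be a finite-dimensional semisimple Lie algebra over an algebraically closed field of characteristic zero, σ an involutive automorphism of g with eigenspace decomposition g = g₀ ⊕ g₁ (g_i the (−1)^i-eigenspace). Then for every v ∈ g₁, writing g_v for the centraliser of v in g, g_{0,v} = g_v ∩ g₀ and g_{1,v} = g_v ∩ g₁, one has dim g₀ − dim g_{0,v} = dim g₁ − dim g_{1,v}. -/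
open scoped BigOperators
open MvPolynomial Module

noncomputable section

open PY Module


open LieAlgebra LieModule Module

section CartanCrit

variable (K : Type*) [Field K] [IsAlgClosed K] [CharZero K]

theorem PYaux.false_of_isSimple_killingForm_eq_zero
    (L : Type*) [LieRing L] [LieAlgebra K L] [FiniteDimensional K L]
    [LieAlgebra.IsSimple K L] (hk : killingForm K L = 0) : False := by
  classical
  obtain ⟨x0, hx0⟩ := LieAlgebra.exists_isCartanSubalgebra_engel K L
  set H : LieSubalgebra K L := LieSubalgebra.engel K x0 with hHdef
  haveI : H.IsCartanSubalgebra := hx0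
  -- the trace form of the H-module L vanishes
  have htf : ∀ x y : H, LieModule.traceForm K H L x y = 0 := by
    intro x y
    have h1 : LieModule.traceForm K H L x y = killingForm K L (x : L) (y : L) := by
      rw [← LieAlgebra.restrict_killingForm]
      rfl
    rw [h1, hk]
    rfl
  -- hence the sum of squares of the weights (with multiplicity) vanishes at every point
  have hsum : ∀ x y : H, (0 : K) = ∑ χ : Weight K H L,
      finrank K (genWeightSpace L (χ : H → K)) • ((χ : H → K) x * (χ : H → K) y) := by
    intro x y
    rw [← LieModule.traceForm_eq_sum_finrank_nsmul_mul K H L x y, htf]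
  -- Step 1: all weights vanish on the coroot space of any nonzero root
  have hvan : ∀ α : Weight K H L, (α : H → K) ≠ 0 →
      ∀ x ∈ corootSpace (α : H → K), ∀ χ : Weight K H L, (χ : H → K) x = 0 := by
    intro α hα
    have hrel : ∀ χ : Weight K H L, ∃ a b : ℤ, 0 < b ∧
        ∀ x ∈ corootSpace (α : H → K), ((a • (α : H → K)) + (b • (χ : H → K))) x = 0 :=
      fun χ => exists_forall_mem_corootSpace_smul_add_eq_zero L (α : H → K) (χ : H → K)
        hα χ.genWeightSpace_ne_bot
    choose a b hb hab using hrel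
    have hbK : ∀ χ : Weight K H L, ((b χ : ℤ) : K) ≠ 0 := by
      intro χ
      exact_mod_cast Int.cast_ne_zero.mpr (ne_of_gt (hb χ))
    -- first show α itself vanishes on its coroot space
    have hαz : ∀ x ∈ corootSpace (α : H → K), (α : H → K) x = 0 := by
      intro x hx
      by_contra hαx
      -- each weight is a rational multiple of α on x
      have hχx : ∀ χ : Weight K H L,
          (χ : H → K) x = ((-(a χ : ℚ) / (b χ : ℚ) : ℚ) : K) * (α : H → K) x := by
        intro χ
        have h2 := hab χ x hx
        rw [Pi.add_apply, Pi.smul_apply, Pi.smul_apply, zsmul_eq_mul, zsmul_eq_mul] at h2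
        have hcast : ((-(a χ : ℚ) / (b χ : ℚ) : ℚ) : K) = -((a χ : ℤ) : K) / ((b χ : ℤ) : K) := by
          push_cast
          ring
        rw [hcast, div_mul_eq_mul_div, eq_div_iff (hbK χ)]
        linear_combination h2
      -- plug into the sum of squares
      have h4 := hsum x x
      have h5 : (0 : K) = (((∑ χ : Weight K H L,
          (finrank K (genWeightSpace L (χ : H → K)) : ℚ) *
            (-(a χ : ℚ) / (b χ : ℚ)) ^ 2 : ℚ)) : K) *
          ((α : H → K) x * (α : H → K) x) := by
        rw [h4]
        push_cast
        rw [Finset.sum_mul]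
        refine Finset.sum_congr rfl fun χ _ => ?_
        rw [hχx χ]
        push_cast
        ring
      have h6 : (((∑ χ : Weight K H L,
          (finrank K (genWeightSpace L (χ : H → K)) : ℚ) *
            (-(a χ : ℚ) / (b χ : ℚ)) ^ 2 : ℚ)) : K) = 0 := by
        rcases mul_eq_zero.mp h5.symm with h | h
        · exact h
        · exact absurd (mul_self_eq_zero.mp h) hαx
      have h7 : (∑ χ : Weight K H L,
          (finrank K (genWeightSpace L (χ : H → K)) : ℚ) *
            (-(a χ : ℚ) / (b χ : ℚ)) ^ 2 : ℚ) = 0 := by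
        exact_mod_cast h6
      -- sum of nonnegative rationals is zero, so the α-term vanishes
      have h8 : ∀ χ ∈ (Finset.univ : Finset (Weight K H L)),
          (0 : ℚ) ≤ (finrank K (genWeightSpace L (χ : H → K)) : ℚ) *
            (-(a χ : ℚ) / (b χ : ℚ)) ^ 2 :=
        fun χ _ => mul_nonneg (by positivity) (sq_nonneg _)
      have h9 := (Finset.sum_eq_zero_iff_of_nonneg h8).mp h7 α (Finset.mem_univ α)
      have hda : (0 : ℚ) < (finrank K (genWeightSpace L (α : H → K)) : ℚ) := by
        exact_mod_cast LieModule.zero_lt_finrank_genWeightSpace α.genWeightSpace_ne_bot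
      have h10 : (-(a α : ℚ) / (b α : ℚ)) = 0 := by
        rcases mul_eq_zero.mp h9 with h | h
        · exact absurd h (ne_of_gt hda)
        · exact pow_eq_zero_iff two_ne_zero |>.mp h
      have h11 : (a α : ℚ) = 0 := by
        have hbα : ((b α : ℤ) : ℚ) ≠ 0 := Int.cast_ne_zero.mpr (ne_of_gt (hb α))
        field_simp at h10
        simpa using h10
      have h12 : (a α : ℤ) = 0 := by exact_mod_cast h11
      have h13 := hab α x hx
      rw [h12, Pi.add_apply, Pi.smul_apply, Pi.smul_apply, zero_smul, zero_add,
        zsmul_eq_mul] at h13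
      exact hαx ((mul_eq_zero.mp h13).resolve_left (hbK α))
    -- now every weight vanishes
    intro x hx χ
    have h2 := hab χ x hx
    rw [Pi.add_apply, Pi.smul_apply, Pi.smul_apply, zsmul_eq_mul, zsmul_eq_mul,
      hαz x hx, mul_zero, zero_add] at h2
    exact (mul_eq_zero.mp h2).resolve_left (hbK χ)
  -- Step 2: the submodules U γ spanned by brackets of root vectors
  set V : (H → K) → Submodule K L := fun γ => (genWeightSpace L γ : Submodule K L) with hVdef
  set U : (H → K) → Submodule K L := fun γ =>
    Submodule.span K {z : L | ∃ αf βf : H → K, αf + βf = γ ∧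
      ∃ xx ∈ genWeightSpace L αf, ∃ yy ∈ genWeightSpace L βf, ⁅xx, yy⁆ = z} with hUdef
  have hUV : ∀ γ, U γ ≤ V γ := by
    intro γ
    apply Submodule.span_le.mpr
    rintro z ⟨αf, βf, habγ, xx, hxx, yy, hyy, rfl⟩
    have h1 : ⁅xx, yy⁆ ∈ genWeightSpace L (αf + βf) :=
      lie_mem_genWeightSpace_of_mem_genWeightSpace hxx hyy
    rw [habγ] at h1
    exact h1
  have hVtop : (⨆ γ : H → K, V γ) = ⊤ := by
    have h1 := LieModule.iSup_genWeightSpace_eq_top K H L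
    rw [← LieSubmodule.iSup_toSubmodule, h1, LieSubmodule.top_toSubmodule]
  -- all brackets lie in the span of the U γ
  have hbr : ∀ xx yy : L, ⁅xx, yy⁆ ∈ ⨆ γ : H → K, U γ := by
    intro xx yy
    have hxx : xx ∈ ⨆ γ : H → K, V γ := by rw [hVtop]; exact Submodule.mem_top
    induction hxx using Submodule.iSup_induction' with
    | mem γx x hx =>
      have hyy : yy ∈ ⨆ γ : H → K, V γ := by rw [hVtop]; exact Submodule.mem_top
      induction hyy using Submodule.iSup_induction' with
      | mem γy y hy =>
        refine Submodule.mem_iSup_of_mem (γx + γy) ?_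
        exact Submodule.subset_span ⟨γx, γy, rfl, x, hx, y, hy, rfl⟩
      | zero => rw [lie_zero]; exact Submodule.zero_mem _
      | add y₁ y₂ _ _ h₁ h₂ => rw [lie_add]; exact Submodule.add_mem _ h₁ h₂
    | zero => rw [zero_lie]; exact Submodule.zero_mem _
    | add x₁ x₂ _ _ h₁ h₂ => rw [add_lie]; exact Submodule.add_mem _ h₁ h₂
  have hUtop : (⨆ γ : H → K, U γ) = ⊤ := by
    rw [eq_top_iff]
    -- the derived ideal is everything
    have hder : ⁅(⊤ : LieIdeal K L), (⊤ : LieIdeal K L)⁆ = ⊤ := by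
      rcases LieAlgebra.IsSimple.eq_bot_or_eq_top ⁅(⊤ : LieIdeal K L), (⊤ : LieIdeal K L)⁆
        with h | h
      · exfalso
        apply LieAlgebra.IsSimple.non_abelian (R := K) (L := L)
        constructor
        intro x y
        have hmem : ⁅x, y⁆ ∈ ⁅(⊤ : LieIdeal K L), (⊤ : LieIdeal K L)⁆ :=
          LieSubmodule.lie_mem_lie trivial trivial
        rw [h] at hmem
        simpa using hmem
      · exact h
    intro z _
    have hz : z ∈ ⁅(⊤ : LieIdeal K L), (⊤ : LieIdeal K L)⁆ := by rw [hder]; trivial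
    rw [← LieSubmodule.mem_toSubmodule, LieSubmodule.lieIdeal_oper_eq_linear_span'] at hz
    refine Submodule.span_le.mpr ?_ hz
    rintro w ⟨xx, -, yy, -, rfl⟩
    exact hbr xx yy
  -- every element of H lies in U 0
  have hU0 : ∀ h : H, (h : L) ∈ U 0 := by
    intro h
    have h1 : (h : L) ∈ V 0 := by
      show (h : L) ∈ (genWeightSpace L (0 : H → K) : Submodule K L)
      rw [show (genWeightSpace L (0 : H → K) : LieSubmodule K H L) = rootSpace H 0 from rfl,
        rootSpace_zero_eq]
      exact h.2
    have h2 : (h : L) ∈ ⨆ γ : H → K, U γ := by rw [hUtop]; trivial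
    have hle : (⨆ γ : H → K, U γ) ≤ U 0 ⊔ ⨆ γ : H → K, ⨆ (_ : γ ≠ 0), V γ := by
      refine iSup_le fun γ => ?_
      by_cases hγ : γ = 0
      · subst hγ; exact le_sup_left
      · exact le_trans (le_trans (hUV γ) (le_iSup₂ (f := fun γ _ => V γ) γ hγ)) le_sup_right
    have hdisj : Disjoint (V 0) (⨆ γ : H → K, ⨆ (_ : γ ≠ 0), V γ) := by
      have hind := LieSubmodule.iSupIndep_toSubmodule.mpr
        (LieModule.iSupIndep_genWeightSpace K H L)
      exact hind (0 : H → K)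
    have h3 : (h : L) ∈ (U 0 ⊔ ⨆ γ : H → K, ⨆ (_ : γ ≠ 0), V γ) ⊓ V 0 :=
      Submodule.mem_inf.mpr ⟨hle h2, h1⟩
    rw [sup_inf_assoc_of_le _ (hUV 0), (Disjoint.eq_bot (hdisj.symm)), sup_bot_eq] at h3
    exact h3
  -- Step 3: every weight vanishes identically
  have hzero : ∀ χ : Weight K H L, ∀ h : H, (χ : H → K) h = 0 := by
    intro χ h
    have hU0le : U 0 ≤ Submodule.map (H : Submodule K L).subtype
        (LinearMap.ker (χ : H →ₗ[K] K)) := by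
      apply Submodule.span_le.mpr
      rintro z ⟨αf, βf, habz, xx, hxx, yy, hyy, rfl⟩
      have hβ : βf = -αf := eq_neg_of_add_eq_zero_right habz
      have hzH : ⁅xx, yy⁆ ∈ H := by
        have h1 : ⁅xx, yy⁆ ∈ genWeightSpace L (αf + βf) :=
          lie_mem_genWeightSpace_of_mem_genWeightSpace hxx hyy
        rw [habz] at h1
        rw [show (genWeightSpace L (0 : H → K) : LieSubmodule K H L) = rootSpace H 0 from rfl,
          rootSpace_zero_eq] at h1
        exact h1
      by_cases hα0 : αf = 0
      · -- both factors in H : use that weights kill commutators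
        have hβ0 : βf = 0 := by rw [hβ, hα0, neg_zero]
        subst hα0; subst hβ0
        have hxH : xx ∈ H := by
          have := hxx
          rw [show (genWeightSpace L (0 : H → K) : LieSubmodule K H L) = rootSpace H 0 from rfl,
            rootSpace_zero_eq] at this
          exact this
        have hyH : yy ∈ H := by
          have := hyy
          rw [show (genWeightSpace L ((0 : H → K) : H → K) : LieSubmodule K H L)
              = rootSpace H 0 from rfl, rootSpace_zero_eq] at this
          exact this
        refine ⟨⁅(⟨xx, hxH⟩ : H), (⟨yy, hyH⟩ : H)⁆, ?_, rfl⟩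
        have := Weight.apply_lie (χ := χ) (⟨xx, hxH⟩ : H) (⟨yy, hyH⟩ : H)
        exact this
      · by_cases hbot : genWeightSpace L αf = ⊥
        · have hxx0 : xx = 0 := by
            rw [hbot] at hxx
            simpa using hxx
          subst hxx0
          rw [zero_lie]
          exact Submodule.zero_mem _
        · have hcor : (⟨⁅xx, yy⁆, hzH⟩ : H) ∈ corootSpace αf := by
            rw [mem_corootSpace]
            exact Submodule.subset_span ⟨xx, hxx, yy, hβ ▸ hyy, rfl⟩
          have hχz := hvan ⟨αf, hbot⟩ hα0 ⟨⁅xx, yy⁆, hzH⟩ hcor χ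
          exact ⟨⟨⁅xx, yy⁆, hzH⟩, hχz, rfl⟩
    obtain ⟨h', hker, hval⟩ := hU0le (hU0 h)
    have hh : h' = h := Subtype.ext hval
    subst hh
    exact hker
  -- Step 4: L = H is nilpotent, contradiction with simplicity
  have hHtop : H = (⊤ : LieSubalgebra K L) := by
    rw [eq_top_iff]
    intro z _
    have h1 : z ∈ (⊤ : LieSubmodule K H L) := trivial
    rw [← LieModule.iSup_genWeightSpace_eq_top K H L] at h1
    rw [← LieSubmodule.mem_toSubmodule, LieSubmodule.iSup_toSubmodule] at h1
    have h2 : ∀ γ : H → K, (genWeightSpace L γ : Submodule K L) ≤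
        (rootSpace H 0 : Submodule K L) := by
      intro γ
      by_cases hbot : genWeightSpace L γ = ⊥
      · rw [hbot]
        simp
      · have hγ0 : γ = 0 := by
          funext w
          exact hzero ⟨γ, hbot⟩ w
        subst hγ0
        exact le_rfl
    have h3 := iSup_le h2 h1
    rw [show (rootSpace H 0 : LieSubmodule K H L).toSubmodule
        = (H.toLieSubmodule : Submodule K L) from by rw [rootSpace_zero_eq]] at h3
    simpa [LieSubalgebra.mem_toLieSubmodule] using h3
  haveI hnilH : LieRing.IsNilpotent H := inferInstance
  haveI hniltop : LieRing.IsNilpotent (⊤ : LieSubalgebra K L) := hHtop ▸ hnilH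
  haveI hnilL : LieRing.IsNilpotent L :=
    LieSubalgebra.topEquiv.nilpotent_iff_equiv_nilpotent.mp hniltop
  haveI hsolv : LieAlgebra.IsSolvable L := inferInstance
  haveI : LieAlgebra.IsSolvable (⊤ : LieIdeal K L) :=
    (LieAlgebra.solvable_iff_equiv_solvable LieIdeal.topEquiv).mpr hsolv
  have htb : (⊤ : LieIdeal K L) = ⊥ := LieAlgebra.HasTrivialRadical.eq_bot_of_isSolvable ⊤
  apply LieAlgebra.IsSimple.non_abelian (R := K) (L := L)
  constructor
  intro x y
  have hx : x ∈ (⊥ : LieIdeal K L) := htb ▸ (by trivial)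
  have hx0 : x = 0 := by simpa using hx
  rw [hx0, zero_lie]

theorem PYaux.isKilling_of_isSemisimple
    (g : Type*) [LieRing g] [LieAlgebra K g] [FiniteDimensional K g]
    [LieAlgebra.IsSemisimple K g] : LieAlgebra.IsKilling K g := by
  haveI : IsAtomistic (LieIdeal K g) :=
    (LieAlgebra.IsSemisimple.booleanGenerators K g).isAtomistic_of_sSup_eq_top
      LieAlgebra.IsSemisimple.sSup_atoms_eq_top
  constructor
  rcases eq_bot_or_exists_atom_le (LieIdeal.killingCompl K g ⊤) with h | h
  · exact h
  exfalso
  obtain ⟨J, hJatom, hJle⟩ := h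
  haveI : LieAlgebra.IsSimple K J := LieAlgebra.IsSemisimple.isSimple_of_isAtom J hJatom
  haveI : FiniteDimensional K J := inferInstance
  have hkJ : killingForm K J = 0 := by
    rw [LieIdeal.killingForm_eq]
    ext x y
    have hy : (y : g) ∈ LieIdeal.killingCompl K g ⊤ := hJle y.2
    rw [LieIdeal.mem_killingCompl] at hy
    have := hy (x : g) trivial
    exact this
  exact PYaux.false_of_isSimple_killingForm_eq_zero K J hkJ

end CartanCrit

section Statement6Aux

open LieAlgebra Module PY

variable {K : Type*} [Field K] [CharZero K]
variable {g : Type*} [LieRing g] [LieAlgebra K g] [FiniteDimensional K g]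

theorem PY.statement6_of_isKilling [LieAlgebra.IsKilling K g]
    (σ : g ≃ₗ⁅K⁆ g) (hσ : PY.IsInvolution K σ) (v : g) (hv : v ∈ PY.oddPart K σ) :
    finrank K (PY.fixedAlg K σ) + finrank K (PY.cent1 K σ v)
      = finrank K (PY.oddPart K σ) + finrank K (PY.cent0 K σ v) := by
  classical
  set κ : LinearMap.BilinForm K g := killingForm K g with hκ
  have hκinv : ∀ x y : g, κ ⁅v, x⁆ y = - κ x ⁅v, y⁆ := by
    intro x y
    have h2 : κ ⁅x, v⁆ y = κ x ⁅v, y⁆ := LieModule.traceForm_apply_lie_apply K g g x v y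
    rw [← lie_skew x v, map_neg, LinearMap.neg_apply] at h2
    rw [← h2, neg_neg]
  have hκσ : ∀ x y : g, κ (σ x) (σ y) = κ x y := fun x y =>
    LieAlgebra.killingForm_of_equiv_apply (σ : g ≃ₗ⁅K⁆ g) x y
  have hv' : σ v = -v := hv
  set G0 : Submodule K g := (PY.fixedAlg K σ : Submodule K g) with hG0
  set G1 : Submodule K g := PY.oddPart K σ with hG1
  have memG0 : ∀ x : g, x ∈ G0 ↔ σ x = x := fun _ => Iff.rfl
  have memG1 : ∀ x : g, x ∈ G1 ↔ σ x = -x := fun _ => Iff.rfl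
  -- the maps A : g₀ → g₁ and B : g₁ → g₀ given by ad v
  have hAmem : ∀ x : G0, ⁅v, (x : g)⁆ ∈ G1 := by
    intro x
    rw [memG1, LieEquiv.map_lie, hv', (memG0 _).mp x.2]
    rw [neg_lie]
  have hBmem : ∀ y : G1, ⁅v, (y : g)⁆ ∈ G0 := by
    intro y
    rw [memG0, LieEquiv.map_lie, hv', (memG1 _).mp y.2]
    rw [neg_lie, lie_neg, neg_neg]
  let A : G0 →ₗ[K] G1 := ((LieAlgebra.ad K g v).comp G0.subtype).codRestrict G1 hAmem
  let B : G1 →ₗ[K] G0 := ((LieAlgebra.ad K g v).comp G1.subtype).codRestrict G0 hBmem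
  have hAapply : ∀ x : G0, (A x : g) = ⁅v, (x : g)⁆ := fun _ => rfl
  have hBapply : ∀ y : G1, (B y : g) = ⁅v, (y : g)⁆ := fun _ => rfl
  -- the pairings
  let θ0 : G0 →ₗ[K] Module.Dual K G0 := κ.compl₁₂ G0.subtype G0.subtype
  let θ1 : G1 →ₗ[K] Module.Dual K G1 := κ.compl₁₂ G1.subtype G1.subtype
  have hθ0apply : ∀ x y : G0, θ0 x y = κ (x : g) (y : g) := fun _ _ => rfl
  have hθ1apply : ∀ x y : G1, θ1 x y = κ (x : g) (y : g) := fun _ _ => rfl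
  have half : ∀ a : K, -a = a → a = 0 := by
    intro a ha
    have h2 : (2 : K) * a = 0 := by
      rw [two_mul]
      nth_rewrite 1 [← ha]
      exact neg_add_cancel a
    exact (mul_eq_zero.mp h2).resolve_left two_ne_zero
  -- orthogonality of G0 and G1
  have horth : ∀ x ∈ G0, ∀ y ∈ G1, κ x y = 0 := by
    intro x hx y hy
    have h := hκσ x y
    rw [(memG0 x).mp hx, (memG1 y).mp hy, map_neg] at h
    exact half _ h
  -- decomposition g = G0 + G1
  have hdec : ∀ z : g, ∃ z0 ∈ G0, ∃ z1 ∈ G1, z = z0 + z1 := by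
    intro z
    refine ⟨(2 : K)⁻¹ • (z + σ z), ?_, (2 : K)⁻¹ • (z - σ z), ?_, ?_⟩
    · rw [memG0, PY.invSmul, PY.invAdd, hσ z, add_comm]
    · have hsub : σ (z - σ z) = σ z - z := by
        rw [sub_eq_add_neg, PY.invAdd]
        have hneg : σ (-σ z) = -σ (σ z) := by
          have := PY.invSmul K σ (-1 : K) (σ z)
          simpa using this
        rw [hneg, hσ z, ← sub_eq_add_neg]
      rw [memG1, PY.invSmul, hsub, ← smul_neg, neg_sub]
    · rw [← smul_add]
      have h4 : z + σ z + (z - σ z) = (2 : K) • z := by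
        rw [two_smul]; abel
      rw [h4, smul_smul, inv_mul_cancel₀ (two_ne_zero), one_smul]
  -- nondegeneracy of the restricted pairings
  have hnd : κ.Nondegenerate := LieAlgebra.IsKilling.killingForm_nondegenerate K g
  have hndL := hnd
  have hnd0 : ∀ x : G0, (∀ y : G0, θ0 x y = 0) → x = 0 := by
    intro x hx
    have hz : ∀ z : g, κ (x : g) z = 0 := by
      intro z
      obtain ⟨z0, hz0, z1, hz1, rfl⟩ := hdec z
      have h8 : κ (x : g) z0 = 0 := hx ⟨z0, hz0⟩
      have h9 : κ (x : g) z1 = 0 := horth (x : g) x.property z1 hz1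
      rw [map_add, h8, h9, add_zero]
    exact Subtype.ext (hndL.1 (x : g) hz)
  have hnd1 : ∀ x : G1, (∀ y : G1, θ1 x y = 0) → x = 0 := by
    intro x hx
    have hz : ∀ z : g, κ (x : g) z = 0 := by
      intro z
      obtain ⟨z0, hz0, z1, hz1, rfl⟩ := hdec z
      have hoz : κ (x : g) z0 = 0 := by
        have h5 := hκσ (x : g) z0
        rw [(memG1 _).mp x.property, (memG0 z0).mp hz0, map_neg, LinearMap.neg_apply] at h5
        exact half _ h5
      have h9 : κ (x : g) z1 = 0 := hx ⟨z1, hz1⟩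
      rw [map_add, hoz, h9, add_zero]
    exact Subtype.ext (hndL.1 (x : g) hz)
  have hθ0inj : Function.Injective θ0 := by
    rw [← LinearMap.ker_eq_bot]
    exact LinearMap.ker_eq_bot'.mpr fun x hx => hnd0 x (fun y => by rw [hx]; rfl)
  have hθ1inj : Function.Injective θ1 := by
    rw [← LinearMap.ker_eq_bot]
    exact LinearMap.ker_eq_bot'.mpr fun x hx => hnd1 x (fun y => by rw [hx]; rfl)
  have hθ0surj : Function.Surjective θ0 :=
    (LinearMap.injective_iff_surjective_of_finrank_eq_finrank
      (Subspace.dual_finrank_eq).symm).mp hθ0inj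
  -- the key relation : θ1 ∘ A = - (B.dualMap ∘ θ0)
  have hrel : θ1.comp A = - (B.dualMap.comp θ0) := by
    refine LinearMap.ext fun x => LinearMap.ext fun y => ?_
    have : θ1 (A x) y = κ ⁅v, (x : g)⁆ (y : g) := rfl
    rw [LinearMap.comp_apply, this, LinearMap.neg_apply, LinearMap.comp_apply,
      LinearMap.neg_apply]
    have h7 : B.dualMap (θ0 x) y = κ (x : g) ⁅v, (y : g)⁆ := rfl
    rw [h7, hκinv]
  -- equality of ranks
  have hr : finrank K (LinearMap.range A) = finrank K (LinearMap.range B) := by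
    calc finrank K (LinearMap.range A)
        = finrank K ((LinearMap.range A).map θ1) :=
          (LinearEquiv.finrank_eq ((LinearMap.range A).equivMapOfInjective θ1 hθ1inj))
      _ = finrank K (LinearMap.range (θ1.comp A)) := by rw [LinearMap.range_comp]
      _ = finrank K (LinearMap.range (B.dualMap.comp θ0)) := by
          rw [hrel, LinearMap.range_neg]
      _ = finrank K (LinearMap.range B.dualMap) := by
          rw [LinearMap.range_comp, LinearMap.range_eq_top.mpr hθ0surj, Submodule.map_top]
      _ = finrank K (LinearMap.range B) :=
          LinearMap.finrank_range_dualMap_eq_finrank_range B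
  -- kernels are the centralisers
  have hc0le : (PY.cent0 K σ v : Submodule K g) ≤ G0 := fun x hx => hx.1
  have hc1le : (PY.cent1 K σ v : Submodule K g) ≤ G1 := fun x hx => hx.1
  have hkerA : LinearMap.ker A = Submodule.comap G0.subtype (PY.cent0 K σ v : Submodule K g) := by
    ext x
    simp only [LinearMap.mem_ker, Submodule.mem_comap, Submodule.subtype_apply]
    constructor
    · intro hx
      have hx' : ⁅v, (x : g)⁆ = 0 := by
        have := congrArg (Subtype.val) hx
        simpa [hAapply] using this
      exact ⟨(memG0 _).mp x.2, by rw [← lie_skew, hx', neg_zero]⟩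
    · intro hx
      have hx' : ⁅v, (x : g)⁆ = 0 := by rw [← neg_eq_zero, lie_skew, hx.2]
      exact Subtype.ext (by rw [hAapply]; exact hx')
  have hkerB : LinearMap.ker B = Submodule.comap G1.subtype (PY.cent1 K σ v : Submodule K g) := by
    ext x
    simp only [LinearMap.mem_ker, Submodule.mem_comap, Submodule.subtype_apply]
    constructor
    · intro hx
      have hx' : ⁅v, (x : g)⁆ = 0 := by
        have := congrArg (Subtype.val) hx
        simpa [hBapply] using this
      exact ⟨(memG1 _).mp x.2, by rw [← lie_skew, hx', neg_zero]⟩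
    · intro hx
      have hx' : ⁅v, (x : g)⁆ = 0 := by rw [← neg_eq_zero, lie_skew, hx.2]
      exact Subtype.ext (by rw [hBapply]; exact hx')
  have hfk0 : finrank K (LinearMap.ker A) = finrank K (PY.cent0 K σ v) := by
    rw [hkerA]
    exact LinearEquiv.finrank_eq (Submodule.comapSubtypeEquivOfLe hc0le)
  have hfk1 : finrank K (LinearMap.ker B) = finrank K (PY.cent1 K σ v) := by
    rw [hkerB]
    exact LinearEquiv.finrank_eq (Submodule.comapSubtypeEquivOfLe hc1le)
  have hrn0 : finrank K (LinearMap.range A) + finrank K (LinearMap.ker A) = finrank K G0 :=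
    LinearMap.finrank_range_add_finrank_ker A
  have hrn1 : finrank K (LinearMap.range B) + finrank K (LinearMap.ker B) = finrank K G1 :=
    LinearMap.finrank_range_add_finrank_ker B
  have hfG0 : finrank K G0 = finrank K (PY.fixedAlg K σ) := rfl
  have hfG1 : finrank K G1 = finrank K (PY.oddPart K σ) := rfl
  omega

end Statement6Aux

/-- for an involution `σ` of a semisimple Lie algebra `g` with eigenspace
decomposition `g = g₀ ⊕ g₁` and any `v ∈ g₁`, one has
`dim g₀ − dim g_{0,v} = dim g₁ − dim g_{1,v}` (stated additively). -/
theorem statement6 (𝕜 : Type*) [Field 𝕜] [IsAlgClosed 𝕜] [CharZero 𝕜]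
    (g : Type*) [LieRing g] [LieAlgebra 𝕜 g] [FiniteDimensional 𝕜 g]
    [LieAlgebra.IsSemisimple 𝕜 g]
    (σ : g ≃ₗ⁅𝕜⁆ g) (hσ : IsInvolution 𝕜 σ)
    (v : g) (hv : v ∈ oddPart 𝕜 σ) :
    finrank 𝕜 (fixedAlg 𝕜 σ) + finrank 𝕜 (cent1 𝕜 σ v)
      = finrank 𝕜 (oddPart 𝕜 σ) + finrank 𝕜 (cent0 𝕜 σ v) := by
  haveI : LieAlgebra.IsKilling 𝕜 g := PYaux.isKilling_of_isSemisimple 𝕜 g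
  exact PY.statement6_of_isKilling σ hσ v hv
end
end
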